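/- For any double sequence a_{k,l} of complex numbers with sum over k,l of (k+1)^α (l+1)^α |a_{k,l}|^2 finite (α ≤ 2), the diagonal coefficients b_n = Σ_{k=0}^n a_{k,n-k} satisfy Σ_n (n+1)^β |b_n|^2 ≤ Σ_{k,l} (k+1)^α (l+1)^α |a_{k,l}|^2, where β = α−1 if α ≥ 0 and β = 2α−1 if α < 0. -/

import Mathlib

open scoped ENNReal NNReal Classical
open Filter

/-- Weight `(k+1)^α` as an extended nonnegative real. -/
noncomputable def wt (α : ℝ) (k : ℕ) : ℝ≥0∞ := ((k : ℝ≥0∞) + 1) ^ α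

/-- Squared norm of the Dirichlet-type space `𝔇_α` of the bidisk, at the level of
Taylor coefficients `a k l`. -/
noncomputable def Dnorm2 (α : ℝ) (a : ℕ → ℕ → ℂ) : ℝ≥0∞ :=
  ∑' p : ℕ × ℕ, wt α p.1 * wt α p.2 * ((‖a p.1 p.2‖₊ : ℝ≥0∞)) ^ 2

/-- Squared norm of the one-variable Dirichlet-type space `D_α`. -/
noncomputable def dnorm2 (α : ℝ) (a : ℕ → ℂ) : ℝ≥0∞ :=
  ∑' k : ℕ, wt α k * ((‖a k‖₊ : ℝ≥0∞)) ^ 2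

/-- Cauchy product (coefficients of the product of two power series in two variables). -/
noncomputable def conv2 (p a : ℕ → ℕ → ℂ) : ℕ → ℕ → ℂ := fun k l =>
  ∑ i ∈ Finset.range (k + 1), ∑ j ∈ Finset.range (l + 1), p i j * a (k - i) (l - j)

/-- Cauchy product in one variable. -/
noncomputable def conv1 (p a : ℕ → ℂ) : ℕ → ℂ := fun k =>
  ∑ i ∈ Finset.range (k + 1), p i * a (k - i)

/-- Coefficients of the constant function `1` in two variables. -/
def one2 : ℕ → ℕ → ℂ := fun k l => if k = 0 ∧ l = 0 then 1 else 0

/-- Coefficients of the constant function `1` in one variable. -/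
def one1 : ℕ → ℂ := fun k => if k = 0 then 1 else 0

/-- `p` is (the coefficient sequence of) a polynomial in `𝔓_n`. -/
def IsPoly2 (n : ℕ) (p : ℕ → ℕ → ℂ) : Prop := ∀ k l, n < k ∨ n < l → p k l = 0

/-- `p` is a one-variable polynomial of degree at most `n`. -/
def IsPoly1 (n : ℕ) (p : ℕ → ℂ) : Prop := ∀ k, n < k → p k = 0

/-- Cyclicity of `a` in `𝔇_α`: some sequence of polynomials `p n` has `‖p n · f - 1‖_α → 0`. -/
def Cyclic2 (α : ℝ) (a : ℕ → ℕ → ℂ) : Prop :=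
  ∃ p : ℕ → ℕ → ℕ → ℂ, (∀ n, ∃ m, IsPoly2 m (p n)) ∧
    Tendsto (fun n => Dnorm2 α (fun k l => conv2 (p n) a k l - one2 k l)) atTop (nhds 0)

/-- Cyclicity of `a` in the one-variable space `D_α`. -/
def Cyclic1 (α : ℝ) (a : ℕ → ℂ) : Prop :=
  ∃ p : ℕ → ℕ → ℂ, (∀ n, ∃ m, IsPoly1 m (p n)) ∧
    Tendsto (fun n => dnorm2 α (fun k => conv1 (p n) a k - one1 k)) atTop (nhds 0)

/-- Squared distance `dist²_{𝔇_α}(1, f · 𝔓_n)`. -/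
noncomputable def distP2 (α : ℝ) (n : ℕ) (a : ℕ → ℕ → ℂ) : ℝ≥0∞ :=
  ⨅ (p : ℕ → ℕ → ℂ) (_ : IsPoly2 n p), Dnorm2 α (fun k l => conv2 p a k l - one2 k l)

lemma nat_key {n k : ℕ} (hk : k ≤ n) : n + 1 ≤ (k + 1) * (n - k + 1) := by
  obtain ⟨m, rfl⟩ := Nat.exists_eq_add_of_le hk
  simp [Nat.add_sub_cancel_left]
  nlinarith

lemma key (α : ℝ) (n k : ℕ) (hk : k ≤ n) :
    wt (if 0 ≤ α then α - 1 else 2 * α - 1) n * ((n : ℝ≥0∞) + 1) ≤ wt α k * wt α (n - k) := by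
  set N : ℝ≥0∞ := (n : ℝ≥0∞) + 1 with hN
  set K : ℝ≥0∞ := (k : ℝ≥0∞) + 1 with hK
  set L : ℝ≥0∞ := ((n - k : ℕ) : ℝ≥0∞) + 1 with hL
  have hN0 : N ≠ 0 := by simp [hN]
  have hNt : N ≠ ⊤ := by simp [hN]
  have hKt : K ≠ ⊤ := by simp [hK]
  have hLt : L ≠ ⊤ := by simp [hL]
  have hNKL : N ≤ K * L := by
    have := nat_key hk
    calc N = ((n + 1 : ℕ) : ℝ≥0∞) := by rw [hN]; push_cast; ring
    _ ≤ (((k + 1) * (n - k + 1) : ℕ) : ℝ≥0∞) := Nat.cast_le.mpr this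
    _ = K * L := by rw [hK, hL]; push_cast; ring
  have hKLN : K * L ≤ N * N := by
    have h1 : K ≤ N := by rw [hK, hN]; exact add_le_add_left (Nat.cast_le.mpr hk) 1
    have h2 : L ≤ N := by rw [hL, hN]; exact add_le_add_left (Nat.cast_le.mpr (Nat.sub_le n k)) 1
    exact mul_le_mul' h1 h2
  have hmul : (K * L) ^ α = K ^ α * L ^ α := ENNReal.mul_rpow_of_ne_top hKt hLt α
  show N ^ _ * N ≤ K ^ α * L ^ α
  rw [← hmul]
  have epow : ∀ β : ℝ, N ^ (β - 1) * N = N ^ β := fun β => by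
    nth_rewrite 2 [← ENNReal.rpow_one N]
    rw [← ENNReal.rpow_add _ _ hN0 hNt]
    congr 1; ring
  by_cases h : 0 ≤ α
  · rw [if_pos h, epow α]
    exact ENNReal.rpow_le_rpow hNKL h
  · rw [if_neg h, epow (2 * α)]
    have e2 : N ^ (2 * α) = (N * N) ^ α := by
      rw [ENNReal.mul_rpow_of_ne_top hNt hNt, ← ENNReal.rpow_add _ _ hN0 hNt]
      congr 1; ring
    rw [e2]
    have hneg : 0 ≤ -α := by linarith
    rw [← neg_neg α, ENNReal.rpow_neg (N * N), ENNReal.rpow_neg (K * L)]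
    exact ENNReal.inv_le_inv.mpr (ENNReal.rpow_le_rpow hKLN hneg)

lemma sq_sum_ennreal (n : ℕ) (c : ℕ → ℝ≥0) :
    ((∑ k ∈ Finset.range (n + 1), c k : ℝ≥0) : ℝ≥0∞) ^ 2 ≤
      ((n : ℝ≥0∞) + 1) * ∑ k ∈ Finset.range (n + 1), ((c k : ℝ≥0∞)) ^ 2 := by
  have h : (∑ k ∈ Finset.range (n + 1), c k) ^ 2 ≤
      ((n + 1 : ℕ) : ℝ≥0) * ∑ k ∈ Finset.range (n + 1), c k ^ 2 := by
    simpa [Finset.card_range] using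
      sq_sum_le_card_mul_sum_sq (s := Finset.range (n + 1)) (f := c)
  calc ((∑ k ∈ Finset.range (n + 1), c k : ℝ≥0) : ℝ≥0∞) ^ 2
      = (((∑ k ∈ Finset.range (n + 1), c k) ^ 2 : ℝ≥0) : ℝ≥0∞) := by push_cast; ring
    _ ≤ ((((n + 1 : ℕ) : ℝ≥0) * ∑ k ∈ Finset.range (n + 1), c k ^ 2 : ℝ≥0) : ℝ≥0∞) :=
        ENNReal.coe_le_coe.mpr h
    _ = ((n : ℝ≥0∞) + 1) * ∑ k ∈ Finset.range (n + 1), ((c k : ℝ≥0∞)) ^ 2 := by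
        push_cast; ring

lemma tsum_diag (F : ℕ × ℕ → ℝ≥0∞) :
    ∑' p : ℕ × ℕ, F p = ∑' n : ℕ, ∑ k ∈ Finset.range (n + 1), F (k, n - k) := by
  rw [← Finset.HasAntidiagonal.sigmaAntidiagonalEquivProd.tsum_eq F, ENNReal.tsum_sigma']
  congr 1
  funext n
  rw [show (fun b : (Finset.HasAntidiagonal.antidiagonal n : Finset (ℕ × ℕ)) =>
        F (Finset.HasAntidiagonal.sigmaAntidiagonalEquivProd ⟨n, b⟩)) = fun b => F b.val from rfl,
    Finset.tsum_subtype, Finset.Nat.sum_antidiagonal_eq_sum_range_succ_mk]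

/-- diagonal restriction estimate. -/
theorem stmt0 (α : ℝ) (hα : α ≤ 2) (a : ℕ → ℕ → ℂ) (hfin : Dnorm2 α a ≠ ⊤) :
    ∑' n : ℕ, wt (if 0 ≤ α then α - 1 else 2 * α - 1) n *
      ((‖∑ k ∈ Finset.range (n + 1), a k (n - k)‖₊ : ℝ≥0∞)) ^ 2 ≤ Dnorm2 α a := by
  rw [Dnorm2, tsum_diag (fun p => wt α p.1 * wt α p.2 * ((‖a p.1 p.2‖₊ : ℝ≥0∞)) ^ 2)]
  refine ENNReal.tsum_le_tsum fun n => ?_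
  set β := if 0 ≤ α then α - 1 else 2 * α - 1 with hβ
  set c : ℕ → ℝ≥0 := fun k => ‖a k (n - k)‖₊ with hc
  calc wt β n * ((‖∑ k ∈ Finset.range (n + 1), a k (n - k)‖₊ : ℝ≥0∞)) ^ 2
      ≤ wt β n * ((∑ k ∈ Finset.range (n + 1), c k : ℝ≥0) : ℝ≥0∞) ^ 2 := by
        gcongr
        exact nnnorm_sum_le (Finset.range (n + 1)) (fun k => a k (n - k))
    _ ≤ wt β n * (((n : ℝ≥0∞) + 1) * ∑ k ∈ Finset.range (n + 1), ((c k : ℝ≥0∞)) ^ 2) := by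
        gcongr
        exact sq_sum_ennreal n c
    _ = ∑ k ∈ Finset.range (n + 1), (wt β n * ((n : ℝ≥0∞) + 1)) * ((c k : ℝ≥0∞)) ^ 2 := by
        rw [← mul_assoc, Finset.mul_sum]
    _ ≤ ∑ k ∈ Finset.range (n + 1), wt α k * wt α (n - k) * ((c k : ℝ≥0∞)) ^ 2 := by
        refine Finset.sum_le_sum fun k hk => ?_
        have hk' : k ≤ n := Nat.lt_succ_iff.mp (Finset.mem_range.mp hk)
        exact mul_le_mul_left (key α n k hk') _
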